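/- Let r > 5 with r not divisible by 3, and suppose c is a b-fold oriented k-coloring of the directed cycle C_r with k < 4b, where c(u_0) = A, c(u_1) = B, c(u_2) = C. Then no three consecutive vertices u_i, u_{i+1}, u_{i+2} can all have color sets intersecting the same set X ∈ {A, B, C}, and no three consecutive vertices can all have color sets disjoint from the same set X ∈ {A, B, C}. -/

import Mathlib

/-- An oriented graph: a directed graph with no loops and no directed 2-cycles. -/
structure OGraph (V : Type*) where
  adj : V → V → Prop
  irrefl : ∀ v, ¬ adj v v
  asymm : ∀ u v, adj u v → ¬ adj v u

/-- A homomorphism of oriented graphs. -/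
def OGraph.Hom {V W : Type*} (G : OGraph V) (H : OGraph W) (f : V → W) : Prop :=
  ∀ u v, G.adj u v → H.adj (f u) (f v)

/-- `f` is a `b`-fold oriented `k`-coloring of `G`. -/
def IsFoldColoring {V : Type*} (G : OGraph V) (b k : ℕ) (f : V → Finset (Fin k)) : Prop :=
  (∀ v, (f v).card = b) ∧
  (∀ u v, G.adj u v → Disjoint (f u) (f v)) ∧
  (∀ x y z w, G.adj x y → G.adj z w → ¬ Disjoint (f x) (f w) → Disjoint (f y) (f z))

/-- The `b`-fold oriented chromatic number. -/
noncomputable def foldChrom {V : Type*} (G : OGraph V) (b : ℕ) : ℕ :=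
  sInf {k | ∃ f : V → Finset (Fin k), IsFoldColoring G b k f}

/-- The fractional oriented chromatic number: the infimum of `k/b` over all
`b`-fold oriented `k`-colorings. -/
noncomputable def fracChrom {V : Type*} (G : OGraph V) : ℝ :=
  sInf {x : ℝ | ∃ (b k : ℕ) (f : V → Finset (Fin k)),
    0 < b ∧ IsFoldColoring G b k f ∧ x = (k : ℝ) / b}

/-- The directed cycle of length `r`. -/
def dirCycle (r : ℕ) (hr : 3 ≤ r) : OGraph (ZMod r) where
  adj u v := v = u + 1
  irrefl := by
    intro v hv
    haveI : NeZero r := ⟨by omega⟩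
    have h1 : ((1 : ℕ) : ZMod r) = 0 := by
      have := left_eq_add.mp hv
      simpa using this
    rw [ZMod.natCast_eq_zero_iff] at h1
    have := Nat.le_of_dvd one_pos h1
    omega
  asymm := by
    intro u v h1 h2
    haveI : NeZero r := ⟨by omega⟩
    have : u = u + 1 + 1 := by rw [← h1]; exact h2
    have h2' : ((2 : ℕ) : ZMod r) = 0 := by
      have := left_eq_add.mp (by rw [add_assoc] at this; exact this)
      push_cast
      simpa [one_add_one_eq_two] using this
    rw [ZMod.natCast_eq_zero_iff] at h2'
    have := Nat.le_of_dvd two_pos h2'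
    omega

lemma four_disj_aux {k b : ℕ} (s1 s2 s3 s4 : Finset (Fin k))
    (h1 : s1.card = b) (h2 : s2.card = b) (h3 : s3.card = b) (h4 : s4.card = b)
    (d12 : Disjoint s1 s2) (d13 : Disjoint s1 s3) (d14 : Disjoint s1 s4)
    (d23 : Disjoint s2 s3) (d24 : Disjoint s2 s4) (d34 : Disjoint s3 s4) :
    4 * b ≤ k := by
  have hcard : (s1 ∪ s2 ∪ s3 ∪ s4).card = 4 * b := by
    rw [Finset.card_union_of_disjoint (by simp [d14, d24, d34]),
        Finset.card_union_of_disjoint (by simp [d13, d23]),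
        Finset.card_union_of_disjoint d12, h1, h2, h3, h4]
    ring
  calc 4 * b = (s1 ∪ s2 ∪ s3 ∪ s4).card := hcard.symm
    _ ≤ Finset.univ.card := Finset.card_le_univ _
    _ = k := by simp

theorem stmt13 (r b k : ℕ) (hr : 5 < r) (h3 : ¬ (3 ∣ r)) (hk : k < 4 * b)
    (c : ZMod r → Finset (Fin k))
    (hc : IsFoldColoring (dirCycle r (by omega)) b k c) :
    ∀ i : ZMod r, ∀ X ∈ ({c 0, c 1, c 2} : Set (Finset (Fin k))),
      ¬ (¬ Disjoint (c i) X ∧ ¬ Disjoint (c (i + 1)) X ∧ ¬ Disjoint (c (i + 2)) X) ∧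
      ¬ (Disjoint (c i) X ∧ Disjoint (c (i + 1)) X ∧ Disjoint (c (i + 2)) X) := by
  obtain ⟨hcard, hadj, hor⟩ := hc
  have hb : 0 < b := by omega
  -- adjacent color sets are disjoint
  have step : ∀ a : ZMod r, Disjoint (c a) (c (a + 1)) := fun a => hadj a (a + 1) rfl
  -- color sets at distance two are disjoint
  have step2 : ∀ a : ZMod r, Disjoint (c a) (c (a + 2)) := by
    intro a
    by_contra h
    have hd := hor a (a + 1) (a + 1) (a + 2) rfl (by show a + 2 = a + 1 + 1; ring) h
    rw [disjoint_self] at hd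
    have hc1 := hcard (a + 1)
    rw [hd] at hc1
    simp at hc1
    omega
  -- key rule from the orientation condition
  have mrule : ∀ a j : ZMod r, ¬ Disjoint (c a) (c j) →
      Disjoint (c (j + 1)) (c (a - 1)) := by
    intro a j h
    exact hor j (j + 1) (a - 1) a rfl (by show a = a - 1 + 1; ring)
      (fun hd => h hd.symm)
  intro i X hX
  have hXj : ∃ j : ZMod r, X = c j := by
    rcases hX with h | h | h
    · exact ⟨0, h⟩
    · exact ⟨1, h⟩
    · exact ⟨2, h⟩
  obtain ⟨j, rfl⟩ := hXj
  constructor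
  · rintro ⟨h0, h1, h2⟩
    have d1 : Disjoint (c (j + 1)) (c (i - 1)) := mrule i j h0
    have d2 : Disjoint (c (j + 1)) (c i) := by
      have := mrule (i + 1) j h1
      simpa using this
    have d3 : Disjoint (c (j + 1)) (c (i + 1)) := by
      have := mrule (i + 2) j h2
      have e : i + 2 - 1 = i + 1 := by ring
      rwa [e] at this
    have p1 : Disjoint (c (i - 1)) (c i) := by
      have := step (i - 1); rwa [sub_add_cancel] at this
    have p2 : Disjoint (c (i - 1)) (c (i + 1)) := by
      have := step2 (i - 1)
      have e : i - 1 + 2 = i + 1 := by ring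
      rwa [e] at this
    have hle := four_disj_aux (c (i - 1)) (c i) (c (i + 1)) (c (j + 1))
      (hcard _) (hcard _) (hcard _) (hcard _)
      p1 p2 d1.symm (step i) d2.symm d3.symm
    omega
  · rintro ⟨h0, h1, h2⟩
    have hle := four_disj_aux (c i) (c (i + 1)) (c (i + 2)) (c j)
      (hcard _) (hcard _) (hcard _) (hcard _)
      (step i) (step2 i) h0
      (by have := step (i + 1); rwa [add_assoc, one_add_one_eq_two] at this)
      h1 h2
    omega
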